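/- (Theorem 7) For every k >= 1 and every i with 0 <= i <= 2^k - 2, t(2^k + 1 + i) = 2 * (the sum, over all m >= 0 with m <= wt(i+m), of 2^(wt(i+m) - m) * binom(wt(i+m), m)); moreover t(2^(k+1)) = 2^(k+1). -/

import Mathlib

/-- The binary weight of `n`: the number of 1s in the binary expansion of `n`. -/
def wt (n : ℕ) : ℕ := (Nat.digits 2 n).sum

/-- One summand of the explicit formula. -/
def tg (n m : ℕ) : ℕ := 2 ^ (wt (n + m) - m) * (wt (n + m)).choose m

/-- The truncated explicit sum. -/
def tf (n : ℕ) : ℕ := ∑ m ∈ Finset.range (n + 2), tg n m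

lemma wt_zero : wt 0 = 0 := by simp [wt]

lemma wt_two_mul (n : ℕ) : wt (2 * n) = wt n := by
  rcases Nat.eq_zero_or_pos n with rfl | hn
  · simp
  · rw [wt, Nat.digits_def' (by norm_num : 1 < 2) (by omega)]
    simp [Nat.mul_div_cancel_left _ (by norm_num : 0 < 2), wt]

lemma wt_two_mul_add_one (n : ℕ) : wt (2 * n + 1) = wt n + 1 := by
  rw [wt, Nat.digits_def' (by norm_num : 1 < 2) (by omega)]
  have h1 : (2 * n + 1) % 2 = 1 := by omega
  have h2 : (2 * n + 1) / 2 = n := by omega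
  rw [h1, h2]
  simp [wt]; omega

lemma wt_one : wt 1 = 1 := by
  have := wt_two_mul_add_one 0
  simpa [wt_zero] using this

lemma wt_le_self : ∀ n, wt n ≤ n := by
  intro n
  induction n using Nat.strong_induction_on with
  | _ n ih =>
    rcases Nat.eq_zero_or_pos n with rfl | hn
    · simp [wt_zero]
    · obtain ⟨q, hq⟩ : ∃ q, n = 2 * q ∨ n = 2 * q + 1 := ⟨n / 2, by omega⟩
      rcases hq with rfl | rfl
      · rw [wt_two_mul]; have := ih q (by omega); omega
      · rw [wt_two_mul_add_one]; have := ih q (by omega); omega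

lemma two_pow_wt_le : ∀ n, 2 ^ wt n ≤ n + 1 := by
  intro n
  induction n using Nat.strong_induction_on with
  | _ n ih =>
    rcases Nat.eq_zero_or_pos n with rfl | hn
    · simp [wt_zero]
    · obtain ⟨q, hq⟩ : ∃ q, n = 2 * q ∨ n = 2 * q + 1 := ⟨n / 2, by omega⟩
      rcases hq with rfl | rfl
      · rw [wt_two_mul]; have := ih q (by omega); omega
      · rw [wt_two_mul_add_one, pow_succ]; have := ih q (by omega); omega

lemma wt_lt_self {n : ℕ} (hn : 2 ≤ n) : wt n < n := by
  obtain ⟨q, hq⟩ : ∃ q, n = 2 * q ∨ n = 2 * q + 1 := ⟨n / 2, by omega⟩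
  rcases hq with rfl | rfl
  · rw [wt_two_mul]; have := wt_le_self q; omega
  · rw [wt_two_mul_add_one]; have := wt_le_self q; omega

lemma wt_pow_add : ∀ k r : ℕ, r < 2 ^ k → wt (2 ^ k + r) = wt r + 1 := by
  intro k
  induction k with
  | zero =>
    intro r hr
    have : r = 0 := by simpa using hr
    subst this
    simp [wt_one, wt_zero]
  | succ k ih =>
    intro r hr
    have hp : 2 ^ (k + 1) = 2 * 2 ^ k := by ring
    obtain ⟨q, hq⟩ : ∃ q, r = 2 * q ∨ r = 2 * q + 1 := ⟨r / 2, by omega⟩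
    rcases hq with rfl | rfl
    · have h1 : 2 ^ (k + 1) + 2 * q = 2 * (2 ^ k + q) := by rw [hp]; ring
      rw [h1, wt_two_mul, ih q (by omega), wt_two_mul]
    · have h1 : 2 ^ (k + 1) + (2 * q + 1) = 2 * (2 ^ k + q) + 1 := by rw [hp]; ring
      rw [h1, wt_two_mul_add_one, ih q (by omega), wt_two_mul_add_one]

lemma wt_pow (k : ℕ) : wt (2 ^ k) = 1 := by
  have := wt_pow_add k 0 (by positivity)
  simpa [wt_zero] using this

lemma wt_pow_sub_one : ∀ k : ℕ, wt (2 ^ k - 1) = k := by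
  intro k
  induction k with
  | zero => simpa using wt_zero
  | succ k ih =>
    have hp : 1 ≤ 2 ^ k := Nat.one_le_two_pow
    have h1 : 2 ^ (k + 1) - 1 = 2 * (2 ^ k - 1) + 1 := by
      have : 2 ^ (k + 1) = 2 * 2 ^ k := by ring
      omega
    rw [h1, wt_two_mul_add_one, ih]

lemma two_mul_le_two_pow {m : ℕ} (hm : 1 ≤ m) : 2 * m ≤ 2 ^ m := by
  induction m with
  | zero => omega
  | succ m ih =>
    rcases Nat.eq_zero_or_pos m with rfl | hm'
    · norm_num
    · have := ih hm'
      have h2 : 2 ≤ 2 ^ m := by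
        calc 2 = 2 * 1 := by ring
        _ ≤ 2 * m := by omega
        _ ≤ 2 ^ m := this
      rw [pow_succ]; omega

lemma tg_eq_zero {n m : ℕ} (h : wt (n + m) < m) : tg n m = 0 := by
  simp [tg, Nat.choose_eq_zero_of_lt h]

lemma tg_far {n m : ℕ} (h : n + 2 ≤ m) : tg n m = 0 := by
  rcases lt_or_ge (wt (n + m)) m with hw | hw
  · exact tg_eq_zero hw
  · exfalso
    have h1 : 2 ^ m ≤ 2 ^ wt (n + m) := Nat.pow_le_pow_right (by norm_num) hw
    have h2 := two_pow_wt_le (n + m)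
    have h3 : 2 * m ≤ 2 ^ m := two_mul_le_two_pow (by omega)
    omega

lemma sum_tg (n N : ℕ) (h : n + 2 ≤ N) : ∑ m ∈ Finset.range N, tg n m = tf n := by
  rw [tf]
  refine (Finset.sum_subset (Finset.range_subset_range.2 h) ?_).symm
  intro m _ hm
  exact tg_far (by simp at hm; omega)

/-- The finsum in the theorem equals the truncated finset sum. -/
lemma finsum_eq_tf (n : ℕ) :
    (∑ᶠ m ∈ {m : ℕ | m ≤ wt (n + m)}, 2 ^ (wt (n + m) - m) * (wt (n + m)).choose m)
      = tf n := by
  have h : {m : ℕ | m ≤ wt (n + m)} ∩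
      Function.support (fun m => 2 ^ (wt (n + m) - m) * (wt (n + m)).choose m)
      = ↑(Finset.range (n + 2)) ∩
      Function.support (fun m => 2 ^ (wt (n + m) - m) * (wt (n + m)).choose m) := by
    ext m
    simp only [Set.mem_inter_iff, Set.mem_setOf_eq, Function.mem_support, Finset.coe_range,
      Set.mem_Iio]
    constructor
    · rintro ⟨h1, h2⟩
      refine ⟨?_, h2⟩
      by_contra hm
      exact h2 (by simpa [tg] using tg_far (n := n) (m := m) (by omega))
    · rintro ⟨h1, h2⟩
      refine ⟨?_, h2⟩
      by_contra hm
      exact h2 (by simpa [tg] using tg_eq_zero (n := n) (m := m) (by omega))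
  rw [finsum_mem_eq_sum_of_inter_support_eq _ h]
  rfl

/-- Key recurrence for `tf`. -/
lemma tf_rec (k i : ℕ) (hk : 1 ≤ k) (hi : i + 3 ≤ 2 ^ k) :
    tf (2 ^ k + i) = 2 * tf i + tf (i + 1) := by
  have hp2 : 2 ≤ 2 ^ k := by
    calc 2 = 2 ^ 1 := by norm_num
    _ ≤ 2 ^ k := Nat.pow_le_pow_right (by norm_num) hk
  set N1 := 2 ^ k + i + 1 with hN1
  have h0 : tf (2 ^ k + i) = ∑ m ∈ Finset.range (N1 + 1), tg (2 ^ k + i) m := by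
    rw [tf]
  have hsplit : ∑ m ∈ Finset.range (N1 + 1), tg (2 ^ k + i) m
      = ∑ m ∈ Finset.range N1, tg (2 ^ k + i) (m + 1) + tg (2 ^ k + i) 0 :=
    Finset.sum_range_succ' _ N1
  -- termwise identity
  have hterm : ∀ m ∈ Finset.range N1,
      tg (2 ^ k + i) (m + 1) = 2 * tg i (m + 1) + tg (i + 1) m := by
    intro m hm
    rw [Finset.mem_range] at hm
    have harg1 : 2 ^ k + i + (m + 1) = 2 ^ k + (i + m + 1) := by ring
    have harg2 : i + (m + 1) = i + m + 1 := by ring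
    have harg3 : i + 1 + m = i + m + 1 := by ring
    by_cases hc : i + m + 1 < 2 ^ k
    · -- small case: use Pascal
      obtain ⟨w, hwdef⟩ : ∃ w, wt (i + m + 1) = w := ⟨_, rfl⟩
      have hw : wt (2 ^ k + (i + m + 1)) = w + 1 := by
        rw [wt_pow_add k _ hc, hwdef]
      rw [tg, tg, tg, harg1, harg2, harg3, hw, hwdef]
      rcases Nat.lt_trichotomy m w with hmw | hmw | hmw
      · -- m + 1 ≤ w
        have e1 : w + 1 - (m + 1) = (w - (m + 1)) + 1 := by omega
        have e2 : w - m = (w - (m + 1)) + 1 := by omega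
        rw [Nat.choose_succ_succ' w m, e1, e2, pow_succ]
        ring
      · -- m = w
        subst hmw
        have e1 : m + 1 - (m + 1) = 0 := by omega
        have e2 : m - m = 0 := by omega
        rw [e1, e2, Nat.choose_self, Nat.choose_self,
          Nat.choose_eq_zero_of_lt (by omega : m < m + 1)]
        ring
      · -- w < m
        rw [Nat.choose_eq_zero_of_lt (by omega : w + 1 < m + 1),
          Nat.choose_eq_zero_of_lt (by omega : w < m + 1),
          Nat.choose_eq_zero_of_lt hmw]
        ring
    · -- large case: everything vanishes
      push_neg at hc
      have hpsucc : 2 ^ (k + 1) = 2 * 2 ^ k := by ring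
      have hg0 : tg (2 ^ k + i) (m + 1) = 0 := by
        apply tg_eq_zero
        set r := i + m + 1 - 2 ^ k with hrdef
        have hrlt : r < 2 ^ (k + 1) := by omega
        rw [show 2 ^ k + i + (m + 1) = 2 ^ (k + 1) + r from by omega,
          wt_pow_add (k + 1) r hrlt]
        have h1 := wt_le_self r
        omega
      rw [hg0]
      by_cases hr2 : i + m + 1 < 2 ^ (k + 1)
      · set r := i + m + 1 - 2 ^ k with hrdef
        have hrlt : r < 2 ^ k := by omega
        have hw : wt (i + m + 1) = wt r + 1 := by
          rw [show i + m + 1 = 2 ^ k + r from by omega]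
          exact wt_pow_add k r hrlt
        have hwle := wt_le_self r
        have hzz1 : tg i (m + 1) = 0 := by
          apply tg_eq_zero; rw [harg2]; omega
        have hzz2 : tg (i + 1) m = 0 := by
          apply tg_eq_zero; rw [harg3]; omega
        rw [hzz1, hzz2]
      · push_neg at hr2
        have hm1 : 2 ^ k + 2 ≤ m := by omega
        have hzz1 : tg i (m + 1) = 0 := tg_far (by omega)
        have hzz2 : tg (i + 1) m = 0 := tg_far (by omega)
        rw [hzz1, hzz2]
  have hsum2 : ∑ m ∈ Finset.range N1, tg (2 ^ k + i) (m + 1)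
      = 2 * ∑ m ∈ Finset.range N1, tg i (m + 1) + ∑ m ∈ Finset.range N1, tg (i + 1) m := by
    rw [Finset.mul_sum, ← Finset.sum_add_distrib]
    exact Finset.sum_congr rfl hterm
  have htail : ∑ m ∈ Finset.range N1, tg (i + 1) m = tf (i + 1) :=
    sum_tg (i + 1) N1 (by omega)
  have hfi : tf i = ∑ m ∈ Finset.range N1, tg i (m + 1) + tg i 0 := by
    rw [← sum_tg i (N1 + 1) (by omega)]
    exact Finset.sum_range_succ' _ N1
  have hg00 : tg (2 ^ k + i) 0 = 2 * tg i 0 := by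
    rw [tg, tg]
    have h1 : 2 ^ k + i + 0 = 2 ^ k + i := by ring
    have h2 : i + 0 = i := by ring
    rw [h1, h2, wt_pow_add k i (by omega)]
    simp [pow_succ]
    ring
  rw [h0, hsplit, hsum2, htail, hg00, hfi]
  ring

lemma tf_pow_sub_two (k : ℕ) (hk : 1 ≤ k) : tf (2 ^ k - 2) = (k + 1) * 2 ^ (k - 1) := by
  have hp2 : 2 ≤ 2 ^ k := by
    calc 2 = 2 ^ 1 := by norm_num
    _ ≤ 2 ^ k := Nat.pow_le_pow_right (by norm_num) hk
  have hk1 : 2 ^ k = 2 * 2 ^ (k - 1) := by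
    rw [← pow_succ']
    congr 1
    omega
  have h0 : tf (2 ^ k - 2) = ∑ m ∈ Finset.range (2 ^ k - 2 + 1 + 1), tg (2 ^ k - 2) m := by
    rw [tf, show 2 ^ k - 2 + 2 = 2 ^ k - 2 + 1 + 1 from by omega]
  rw [h0, Finset.sum_range_succ' _ (2 ^ k - 2 + 1), Finset.sum_range_succ' _ (2 ^ k - 2)]
  have hzero : ∑ m ∈ Finset.range (2 ^ k - 2), tg (2 ^ k - 2) (m + 1 + 1) = 0 := by
    apply Finset.sum_eq_zero
    intro m hm
    rw [Finset.mem_range] at hm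
    apply tg_eq_zero
    have harg : 2 ^ k - 2 + (m + 1 + 1) = 2 ^ k + m := by omega
    rw [harg, wt_pow_add k m (by omega)]
    have := wt_le_self m
    omega
  -- wt (2^k - 2) = k - 1
  have hw2 : wt (2 ^ k - 2) = k - 1 := by
    have h1 : 2 ^ k - 2 = 2 * (2 ^ (k - 1) - 1) := by omega
    rw [h1, wt_two_mul, wt_pow_sub_one]
  have hw1 : wt (2 ^ k - 1) = k := wt_pow_sub_one k
  have hg0 : tg (2 ^ k - 2) 0 = 2 ^ (k - 1) := by
    rw [tg]
    have : 2 ^ k - 2 + 0 = 2 ^ k - 2 := by ring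
    rw [this, hw2]
    simp
  have hg1 : tg (2 ^ k - 2) (0 + 1) = k * 2 ^ (k - 1) := by
    rw [tg]
    have h1 : 2 ^ k - 2 + (0 + 1) = 2 ^ k - 1 := by omega
    rw [h1, hw1, Nat.choose_one_right]
    have h2 : k - 1 = k - (0 + 1) := by omega
    rw [← h2]
    ring
  rw [hzero, hg0, hg1]
  ring

lemma tf_pow_sub_one (k : ℕ) (hk : 1 ≤ k) : tf (2 ^ k - 1) = 2 ^ k + 2 := by
  have hp2 : 2 ≤ 2 ^ k := by
    calc 2 = 2 ^ 1 := by norm_num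
    _ ≤ 2 ^ k := Nat.pow_le_pow_right (by norm_num) hk
  have h0 : tf (2 ^ k - 1) = ∑ m ∈ Finset.range (2 ^ k - 2 + 1 + 1 + 1), tg (2 ^ k - 1) m := by
    rw [tf, show 2 ^ k - 1 + 2 = 2 ^ k - 2 + 1 + 1 + 1 from by omega]
  rw [h0, Finset.sum_range_succ' _ (2 ^ k - 2 + 1 + 1), Finset.sum_range_succ' _ (2 ^ k - 2 + 1),
    Finset.sum_range_succ' _ (2 ^ k - 2)]
  have hzero : ∑ m ∈ Finset.range (2 ^ k - 2), tg (2 ^ k - 1) (m + 1 + 1 + 1) = 0 := by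
    apply Finset.sum_eq_zero
    intro m hm
    rw [Finset.mem_range] at hm
    apply tg_eq_zero
    have harg : 2 ^ k - 1 + (m + 1 + 1 + 1) = 2 ^ k + (m + 2) := by omega
    rw [harg, wt_pow_add k (m + 2) (by omega)]
    have := wt_lt_self (n := m + 2) (by omega)
    omega
  have hg0 : tg (2 ^ k - 1) 0 = 2 ^ k := by
    rw [tg]
    have : 2 ^ k - 1 + 0 = 2 ^ k - 1 := by ring
    rw [this, wt_pow_sub_one]
    simp
  have hg1 : tg (2 ^ k - 1) (0 + 1) = 1 := by
    rw [tg]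
    have h1 : 2 ^ k - 1 + (0 + 1) = 2 ^ k := by omega
    rw [h1, wt_pow]
    simp
  have hg2 : tg (2 ^ k - 1) (0 + 1 + 1) = 1 := by
    rw [tg]
    have h1 : 2 ^ k - 1 + (0 + 1 + 1) = 2 ^ k + 1 := by omega
    rw [h1, wt_pow_add k 1 (by omega), wt_one]
    simp
  rw [hzero, hg0, hg1, hg2]
  ring

lemma tf_zero : tf 0 = 2 := by
  have := tf_pow_sub_two 1 le_rfl
  simpa using this

lemma tf_one : tf 1 = 4 := by
  have := tf_pow_sub_one 1 le_rfl
  simpa using this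

/-- **Theorem 7.** For the toothpick increment sequence `t`, for every `k ≥ 1`
and every `i` with `0 ≤ i ≤ 2^k - 2`,
`t (2^k + 1 + i) = 2 ∑_{m ≥ 0, m ≤ wt(i+m)} 2^(wt(i+m)-m) C(wt(i+m), m)`;
moreover `t (2^(k+1)) = 2^(k+1)`. -/
theorem toothpick_explicit_formula
    (t : ℕ → ℕ)
    (ht0 : t 0 = 0) (ht1 : t 1 = 1)
    (htpow : ∀ k, 1 ≤ k → t (2 ^ k) = 2 ^ k)
    (htrec : ∀ k, 1 ≤ k → ∀ i, 1 ≤ i → i ≤ 2 ^ k - 1 →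
      t (2 ^ k + i) = 2 * t i + t (i + 1)) :
    ∀ k, 1 ≤ k →
      (∀ i, i ≤ 2 ^ k - 2 →
        t (2 ^ k + 1 + i) =
          2 * ∑ᶠ m ∈ {m : ℕ | m ≤ wt (i + m)},
                2 ^ (wt (i + m) - m) * (wt (i + m)).choose m) ∧
      t (2 ^ (k + 1)) = 2 ^ (k + 1) := by
  -- t at 2^k - 1
  have ht2 : t 2 = 2 := by simpa using htpow 1 le_rfl
  have hLpred : ∀ k, 1 ≤ k → t (2 ^ k - 1) = k * 2 ^ (k - 1) := by
    intro k hk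
    induction k with
    | zero => omega
    | succ k ih =>
      rcases Nat.eq_zero_or_pos k with rfl | hk'
      · simpa using ht1
      · have hp2 : 2 ≤ 2 ^ k := by
          calc 2 = 2 ^ 1 := by norm_num
          _ ≤ 2 ^ k := Nat.pow_le_pow_right (by norm_num) hk'
        have h1 : 2 ^ (k + 1) - 1 = 2 ^ k + (2 ^ k - 1) := by
          have : 2 ^ (k + 1) = 2 * 2 ^ k := by ring
          omega
        rw [h1, htrec k hk' (2 ^ k - 1) (by omega) le_rfl]
        have h2 : 2 ^ k - 1 + 1 = 2 ^ k := by omega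
        rw [h2, ih hk', htpow k hk']
        have h3 : 2 ^ k = 2 * 2 ^ (k - 1) := by
          rw [← pow_succ']; congr 1; omega
        have h4 : (k + 1) - 1 = k := by omega
        rw [h4]
        calc 2 * (k * 2 ^ (k - 1)) + 2 ^ k = k * (2 * 2 ^ (k - 1)) + 2 ^ k := by ring
        _ = k * 2 ^ k + 2 ^ k := by rw [← h3]
        _ = (k + 1) * 2 ^ k := by ring
  -- main induction
  have hP : ∀ i : ℕ, 2 * t (i + 1) + t (i + 2) = 2 * tf i := by
    intro i
    induction i using Nat.strong_induction_on with
    | _ i ih =>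
      match i, ih with
      | 0, _ => rw [ht1, ht2, tf_zero]
      | 1, _ =>
        have ht3 : t 3 = 4 := by
          have := htrec 1 le_rfl 1 le_rfl (by norm_num)
          simpa [ht1, ht2] using this
        rw [ht2, ht3, tf_one]
      | (i + 2), ih =>
        set n := i + 2 with hn
        have hn2 : 2 ≤ n := by omega
        set k := Nat.log 2 n with hkdef
        have hk1 : 1 ≤ k := by
          rw [hkdef]
          exact (Nat.le_log_iff_pow_le (by norm_num) (by omega)).mpr (by simpa using hn2)
        have hlow : 2 ^ k ≤ n := Nat.pow_log_le_self 2 (by omega)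
        have hhigh : n < 2 ^ (k + 1) := Nat.lt_pow_succ_log_self (by norm_num) n
        have hp2 : 2 ≤ 2 ^ k := by
          calc 2 = 2 ^ 1 := by norm_num
          _ ≤ 2 ^ k := Nat.pow_le_pow_right (by norm_num) hk1
        have hpsucc : 2 ^ (k + 1) = 2 * 2 ^ k := by ring
        set j := n - 2 ^ k with hjdef
        have hjn : n = 2 ^ k + j := by omega
        have hjlt : j < 2 ^ k := by omega
        rcases (by omega : j + 3 ≤ 2 ^ k ∨ j + 2 = 2 ^ k ∨ j + 1 = 2 ^ k) with hcase | hcase | hcase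
        · -- interior case
          have hPj : 2 * t (j + 1) + t (j + 2) = 2 * tf j := ih j (by omega)
          have hPj1 : 2 * t (j + 2) + t (j + 3) = 2 * tf (j + 1) := by
            have := ih (j + 1) (by omega)
            convert this using 3 <;> omega
          have e1 : n + 1 = 2 ^ k + (j + 1) := by omega
          have e2 : n + 2 = 2 ^ k + (j + 2) := by omega
          rw [e1, e2, htrec k hk1 (j + 1) (by omega) (by omega),
            htrec k hk1 (j + 2) (by omega) (by omega)]
          rw [hjn, tf_rec k j hk1 hcase]
          have e3 : j + 1 + 1 = j + 2 := by omega
          have e4 : j + 2 + 1 = j + 3 := by omega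
          rw [e3, e4]
          omega
        · -- n = 2^(k+1) - 2
          have hn' : n = 2 ^ (k + 1) - 2 := by omega
          have e1 : n + 1 = 2 ^ (k + 1) - 1 := by omega
          have e2 : n + 2 = 2 ^ (k + 1) := by omega
          rw [e1, e2, hLpred (k + 1) (by omega), htpow (k + 1) (by omega), hn',
            tf_pow_sub_two (k + 1) (by omega)]
          have h4 : (k + 1) - 1 = k := by omega
          rw [h4, hpsucc]
          ring
        · -- n = 2^(k+1) - 1
          have hn' : n = 2 ^ (k + 1) - 1 := by omega
          have e1 : n + 1 = 2 ^ (k + 1) := by omega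
          have e2 : n + 2 = 2 ^ (k + 1) + 1 := by omega
          rw [e1, e2, htpow (k + 1) (by omega),
            htrec (k + 1) (by omega) 1 le_rfl (by omega), ht1, ht2, hn',
            tf_pow_sub_one (k + 1) (by omega)]
          ring
  intro k hk
  have hp2 : 2 ≤ 2 ^ k := by
    calc 2 = 2 ^ 1 := by norm_num
    _ ≤ 2 ^ k := Nat.pow_le_pow_right (by norm_num) hk
  constructor
  · intro i hi
    have hi' : i + 2 ≤ 2 ^ k := by omega
    have e1 : 2 ^ k + 1 + i = 2 ^ k + (1 + i) := by ring
    rw [e1, htrec k hk (1 + i) (by omega) (by omega), finsum_eq_tf i]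
    have e2 : 1 + i = i + 1 := by ring
    rw [e2]
    have e3 : i + 1 + 1 = i + 2 := by omega
    rw [e3]
    exact hP i
  · exact htpow (k + 1) (by omega)
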